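/- Deterministic one-step squared-distance contraction: let w ∈ W be fixed, let e ∈ ℝ^d satisfy ‖e‖ ≤ ε, and set w⁺ := w − α(∇f(w) + e). Then ‖w⁺ − w*‖² ≤ ‖w − w*‖² − (2α − 4Lα²)·(f(w) − f(w*)) + 2α²ε² + 2α·ε·R. -/

import Mathlib

open RealInnerProductSpace

variable {E : Type*} [NormedAddCommGroup E] [InnerProductSpace ℝ E] [CompleteSpace E]

lemma myLineDeriv {f : E → ℝ} (hfdiff : Differentiable ℝ f) (x v : E) (t : ℝ) :
    HasDerivAt (fun s : ℝ => f (x + s • v)) ⟪gradient f (x + t • v), v⟫ t := by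
  have hg : HasFDerivAt f (InnerProductSpace.toDual ℝ E (gradient f (x + t • v))) (x + t • v) :=
    (hfdiff _).hasGradientAt
  have hline : HasDerivAt (fun s : ℝ => x + s • v) v t :=
    by simpa using ((hasDerivAt_id t).smul_const v).const_add x
  have h := hg.comp_hasDerivAt t hline
  simp only [InnerProductSpace.toDual_apply_apply] at h
  exact h

lemma convex_lb {f : E → ℝ} (hfconv : ConvexOn ℝ Set.univ f)
    (hfdiff : Differentiable ℝ f) (x y : E) :
    f x + ⟪gradient f x, y - x⟫ ≤ f y := by
  set φ : ℝ → ℝ := fun s => f (x + s • (y - x)) with hφ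
  have hconv : ConvexOn ℝ Set.univ φ := by
    have h2 := hfconv.comp_affineMap (AffineMap.lineMap x y : ℝ →ᵃ[ℝ] E)
    simp only [Set.preimage_univ] at h2
    have h3 : φ = f ∘ (AffineMap.lineMap x y : ℝ →ᵃ[ℝ] E) := by
      funext s
      simp [φ, AffineMap.lineMap_apply, add_comm]
    rwa [h3]
  have hderiv : HasDerivAt φ ⟪gradient f x, y - x⟫ 0 := by
    simpa using myLineDeriv hfdiff x (y - x) 0
  have := hconv.le_slope_of_hasDerivAt (Set.mem_univ 0) (Set.mem_univ 1) one_pos hderiv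
  rw [slope_def_field] at this
  simp only [φ, zero_smul, add_zero, one_smul] at this
  have h1 : x + (y - x) = y := by abel
  rw [h1] at this
  linarith [this]

lemma descent_lemma {f : E → ℝ} {L : ℝ} (hL : 0 ≤ L)
    (hfdiff : Differentiable ℝ f)
    (hfL : ∀ x y, ‖gradient f x - gradient f y‖ ≤ L * ‖x - y‖) (x y : E) :
    f y ≤ f x + ⟪gradient f x, y - x⟫ + L / 2 * ‖y - x‖ ^ 2 := by
  set v : E := y - x with hv
  set ψ : ℝ → ℝ := fun t => f (x + t • v) - t * ⟪gradient f x, v⟫ - L * t ^ 2 / 2 * ‖v‖ ^ 2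
    with hψ
  have hd : ∀ t : ℝ, HasDerivAt ψ
      (⟪gradient f (x + t • v), v⟫ - ⟪gradient f x, v⟫ - L * t * ‖v‖ ^ 2) t := by
    intro t
    have h1 := myLineDeriv hfdiff x v t
    have h2 : HasDerivAt (fun t : ℝ => t * ⟪gradient f x, v⟫) ⟪gradient f x, v⟫ t := by
      simpa using (hasDerivAt_id t).mul_const _
    have h3 : HasDerivAt (fun t : ℝ => L * t ^ 2 / 2 * ‖v‖ ^ 2) (L * t * ‖v‖ ^ 2) t := by
      have := ((hasDerivAt_pow 2 t).const_mul L).div_const 2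
      have h4 := this.mul_const (‖v‖ ^ 2)
      convert h4 using 1
      · rfl
      · rfl
      · ring
    exact (h1.sub h2).sub h3
  have hanti : AntitoneOn ψ (Set.Icc 0 1) := by
    apply antitoneOn_of_deriv_nonpos (convex_Icc 0 1)
    · exact fun t _ => ((hd t).continuousAt.continuousWithinAt)
    · exact fun t ht => ((hd t).differentiableAt.differentiableWithinAt)
    · intro t ht
      rw [interior_Icc] at ht
      rw [(hd t).deriv]
      have hcs : ⟪gradient f (x + t • v) - gradient f x, v⟫ ≤
          ‖gradient f (x + t • v) - gradient f x‖ * ‖v‖ := real_inner_le_norm _ _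
      have hlip := hfL (x + t • v) x
      have h5 : x + t • v - x = t • v := by abel
      rw [h5] at hlip
      have h6 : ‖t • v‖ = t * ‖v‖ := by
        rw [norm_smul, Real.norm_eq_abs, abs_of_pos ht.1]
      rw [h6] at hlip
      have h7 : ⟪gradient f (x + t • v) - gradient f x, v⟫ ≤ L * t * ‖v‖ ^ 2 := by
        calc ⟪gradient f (x + t • v) - gradient f x, v⟫
            ≤ ‖gradient f (x + t • v) - gradient f x‖ * ‖v‖ := hcs
          _ ≤ L * (t * ‖v‖) * ‖v‖ := by
              apply mul_le_mul_of_nonneg_right hlip (norm_nonneg _)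
          _ = L * t * ‖v‖ ^ 2 := by ring
      rw [inner_sub_left] at h7
      linarith
  have := hanti (Set.left_mem_Icc.2 zero_le_one) (Set.right_mem_Icc.2 zero_le_one) zero_le_one
  simp only [ψ, zero_smul, add_zero, one_smul, zero_pow, mul_zero, zero_mul, sub_zero,
    one_pow, mul_one, zero_div] at this
  have h1 : x + v = y := by rw [hv]; abel
  rw [h1] at this
  linarith [this]

lemma grad_sq_le {f : E → ℝ} {L : ℝ}
    (hfconv : ConvexOn ℝ Set.univ f) (hfdiff : Differentiable ℝ f)
    (hfL : ∀ x y, ‖gradient f x - gradient f y‖ ≤ L * ‖x - y‖)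
    (wstar : E) (hgradstar : gradient f wstar = 0) (hmin : ∀ x, f wstar ≤ f x) (w : E) :
    ‖gradient f w‖ ^ 2 ≤ 2 * L * (f w - f wstar) := by
  rcases lt_or_ge 0 L with hL | hL
  · set g := gradient f w with hg
    have := descent_lemma hL.le hfdiff hfL w (w - (1 / L) • g)
    have h1 : w - (1 / L) • g - w = -((1 / L) • g) := by abel
    rw [h1] at this
    rw [inner_neg_right, real_inner_smul_right, real_inner_self_eq_norm_sq, norm_neg,
      norm_smul, Real.norm_eq_abs, abs_of_pos (by positivity : (0:ℝ) < 1 / L)] at this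
    have hmin' := hmin (w - (1 / L) • g)
    have hL' : L ≠ 0 := ne_of_gt hL
    have h2 : L / 2 * (1 / L * ‖g‖) ^ 2 = ‖g‖ ^ 2 / (2 * L) := by
      field_simp
    rw [h2] at this
    have h3 : f wstar ≤ f w - 1 / L * ‖g‖ ^ 2 + ‖g‖ ^ 2 / (2 * L) := le_trans hmin' (by linarith)
    have h4 : 1 / L * ‖g‖ ^ 2 - ‖g‖ ^ 2 / (2 * L) = ‖g‖ ^ 2 / (2 * L) := by
      field_simp; ring
    have h5 : ‖g‖ ^ 2 / (2 * L) ≤ f w - f wstar := by linarith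
    rw [div_le_iff₀ (by positivity : (0:ℝ) < 2 * L)] at h5
    linarith
  · have h0 : ‖gradient f w - gradient f wstar‖ ≤ 0 := by
      have := hfL w wstar
      have : L * ‖w - wstar‖ ≤ 0 := mul_nonpos_of_nonpos_of_nonneg hL (norm_nonneg _)
      linarith [hfL w wstar]
    have hgw : gradient f w = 0 := by
      have := le_antisymm h0 (norm_nonneg _)
      rw [hgradstar, sub_zero] at this
      exact norm_eq_zero.1 this
    have heq : f w = f wstar := by
      have h2 := convex_lb hfconv hfdiff w wstar
      rw [hgw] at h2
      simp at h2
      exact le_antisymm h2 (hmin w)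
    rw [hgw, heq]
    simp


set_option maxHeartbeats 1000000 in
/-- Deterministic one-step squared-distance contraction for inexact gradient
descent: if `W ⊆ ℝ^d` is convex with diameter at most `R`, `f` is convex and
differentiable with `L`-Lipschitz gradient, attains its minimum at `wstar ∈ W`
with vanishing gradient, `w ∈ W`, `‖e‖ ≤ ε`, and
`w⁺ = w − α(∇f(w) + e)`, then
`‖w⁺ − w*‖² ≤ ‖w − w*‖² − (2α − 4Lα²)(f(w) − f(w*)) + 2α²ε² + 2αεR`. -/
theorem one_step_contraction_det {d : ℕ}
    (W : Set (EuclideanSpace ℝ (Fin d))) (hWconv : Convex ℝ W)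
    (R : ℝ) (hWdiam : ∀ w w', w ∈ W → w' ∈ W → ‖w - w'‖ ≤ R)
    (f : EuclideanSpace ℝ (Fin d) → ℝ) (L : ℝ)
    (hfconv : ConvexOn ℝ Set.univ f)
    (hfdiff : Differentiable ℝ f)
    (hfL : ∀ x y, ‖gradient f x - gradient f y‖ ≤ L * ‖x - y‖)
    (wstar : EuclideanSpace ℝ (Fin d)) (hwstarW : wstar ∈ W)
    (hgradstar : gradient f wstar = 0)
    (hmin : ∀ x, f wstar ≤ f x)
    (w : EuclideanSpace ℝ (Fin d)) (hwW : w ∈ W)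
    (ε : ℝ) (hε : 0 ≤ ε)
    (e : EuclideanSpace ℝ (Fin d)) (he : ‖e‖ ≤ ε)
    (α : ℝ) (hα : 0 < α)
    (wplus : EuclideanSpace ℝ (Fin d))
    (hwplus : wplus = w - α • (gradient f w + e)) :
    ‖wplus - wstar‖ ^ 2
      ≤ ‖w - wstar‖ ^ 2 - (2 * α - 4 * L * α ^ 2) * (f w - f wstar)
        + 2 * α ^ 2 * ε ^ 2 + 2 * α * ε * R := by
  set g := gradient f w with hg
  have hexp : ‖wplus - wstar‖ ^ 2
      = ‖w - wstar‖ ^ 2 - 2 * α * (⟪g, w - wstar⟫ + ⟪e, w - wstar⟫)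
        + α ^ 2 * ‖g + e‖ ^ 2 := by
    rw [hwplus]
    have h0 : w - α • (g + e) - wstar = (w - wstar) - α • (g + e) := by abel
    rw [h0, @norm_sub_sq_real, real_inner_smul_right, norm_smul, mul_pow,
      Real.norm_eq_abs, sq_abs, real_inner_comm, inner_add_left]
    ring
  have hB : f w - f wstar ≤ ⟪g, w - wstar⟫ := by
    have h1 := convex_lb hfconv hfdiff w wstar
    rw [show wstar - w = -(w - wstar) by abel, inner_neg_right] at h1
    linarith
  have hgsq : ‖g‖ ^ 2 ≤ 2 * L * (f w - f wstar) :=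
    grad_sq_le hfconv hfdiff hfL wstar hgradstar hmin w
  have hsq : ‖g + e‖ ^ 2 ≤ 2 * ‖g‖ ^ 2 + 2 * ‖e‖ ^ 2 := by
    have h1 := norm_add_le g e
    nlinarith [norm_nonneg g, norm_nonneg e, sq_nonneg (‖g‖ - ‖e‖), norm_nonneg (g + e)]
  have hinner : -⟪e, w - wstar⟫ ≤ ε * R := by
    have hcs : |⟪e, w - wstar⟫| ≤ ‖e‖ * ‖w - wstar‖ := abs_real_inner_le_norm _ _
    have hwR : ‖w - wstar‖ ≤ R := hWdiam w wstar hwW hwstarW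
    have h1 : ‖e‖ * ‖w - wstar‖ ≤ ε * R := mul_le_mul he hwR (norm_nonneg _) hε
    linarith [neg_abs_le (⟪e, w - wstar⟫ : ℝ)]
  have he2 : ‖e‖ ^ 2 ≤ ε ^ 2 := by nlinarith [norm_nonneg e]
  have hα2 : (0:ℝ) ≤ α ^ 2 := sq_nonneg α
  have e1 : 2 * α * (f w - f wstar) ≤ 2 * α * ⟪g, w - wstar⟫ := by nlinarith
  have e2 : α ^ 2 * ‖g + e‖ ^ 2 ≤ α ^ 2 * (2 * ‖g‖ ^ 2 + 2 * ‖e‖ ^ 2) := by nlinarith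
  have e3 : α ^ 2 * ‖g‖ ^ 2 ≤ α ^ 2 * (2 * L * (f w - f wstar)) := by nlinarith
  have e4 : α ^ 2 * ‖e‖ ^ 2 ≤ α ^ 2 * ε ^ 2 := by nlinarith
  have e5 : -(2 * α * ⟪e, w - wstar⟫) ≤ 2 * α * (ε * R) := by nlinarith
  rw [hexp]
  linarith
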